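/- arXiv:1902.10983 — 2 statements merged into one kernel-verified Lean document; each statement's English description precedes it below -/
import Mathlib

section
/- For k ≥ 1, the word β = (x₁x₂)^k satisfies loc(β) = pathwidth(G_β) = k, where G_β is the graph on positions of β with edges between consecutive positions and between all pairs of positions carrying the same letter. -/
noncomputable section

attribute [local instance] Classical.propDecidable

variable {X : Type*} [DecidableEq X]

/-- Number of maximal blocks of `true`s in a list of booleans, where the first
argument is the preceding symbol. -/
def blocksAux : Bool → List Bool → ℕ
  | _, [] => 0
  | prev, b :: rest => (if b = true ∧ prev = false then 1 else 0) + blocksAux b rest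

/-- Number of maximal contiguous blocks of positions of `w` whose letter lies in `S`. -/
def blockCount (w : List X) (S : List X) : ℕ :=
  blocksAux false (w.map (fun x => decide (x ∈ S)))

/-- `σ` is a marking sequence for `w`: an enumeration, without repetition,
of the alphabet of `w`. -/
def IsMarkingSeq (w σ : List X) : Prop := σ.Nodup ∧ σ.toFinset = w.toFinset

/-- The marking number of the marking sequence `σ` on `w`: the maximum, over all
stages `i`, of the number of maximal contiguous marked blocks after marking the
first `i` letters of `σ`. -/
def markingNumber (w σ : List X) : ℕ :=
  Finset.sup (Finset.range (σ.length + 1)) (fun i => blockCount w (σ.take i))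

/-- The locality number of `w`: the minimum marking number over all marking
sequences for `w`. -/
def locality (w : List X) : ℕ :=
  sInf {n | ∃ σ, IsMarkingSeq w σ ∧ markingNumber w σ = n}

/-- `B 0, B 1, ..., B m` is a path decomposition of the graph `G`: every edge is
covered by some bag, and the bags containing any fixed vertex form a nonempty
contiguous interval of indices. -/
def IsPathDecomp {W : Type*} (G : SimpleGraph W) (m : ℕ) (B : ℕ → Finset W) : Prop :=
  (∀ u v, G.Adj u v → ∃ t ≤ m, u ∈ B t ∧ v ∈ B t) ∧
  (∀ v : W, ∃ i j, i ≤ j ∧ j ≤ m ∧ ∀ t, v ∈ B t ↔ (i ≤ t ∧ t ≤ j))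

/-- The pathwidth of a graph: the minimum, over path decompositions, of the
maximum bag size minus one. -/
def pathwidth {W : Type*} (G : SimpleGraph W) : ℕ :=
  sInf {w | ∃ m B, IsPathDecomp G m B ∧ ∀ t, (B t).card ≤ w + 1}

/-- The graph `G_α` of the word `α`: vertices are the positions of `α`, and edges
connect consecutive positions as well as every pair of distinct positions carrying
the same letter. -/
def wordGraph (α : List X) : SimpleGraph (Fin α.length) :=
  SimpleGraph.fromRel (fun i j => ((i : ℕ) + 1 = (j : ℕ)) ∨ α.get i = α.get j)

lemma length_word (x₁ x₂ : X) (k : ℕ) :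
    ((List.replicate k [x₁, x₂]).flatten).length = 2 * k := by
  induction k with
  | zero => simp
  | succ k ih => simp [List.replicate_succ, ih]; ring


lemma getElem_word (x₁ x₂ : X) (k i : ℕ) (h : i < ((List.replicate k [x₁, x₂]).flatten).length) :
    ((List.replicate k [x₁, x₂]).flatten)[i] = if i % 2 = 0 then x₁ else x₂ := by
  induction k generalizing i with
  | zero => simp at h
  | succ k ih =>
    simp only [List.replicate_succ, List.flatten_cons] at h ⊢
    match i with
    | 0 => simp
    | 1 => simp
    | (i+2) =>
      rw [List.getElem_append_right (by simp)]
      simp only [List.length_cons, List.length_nil, Nat.zero_add, Nat.add_sub_cancel]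
      rw [ih i (by simp at h ⊢; omega)]
      have h2 : (i + 2) % 2 = i % 2 := by omega
      rw [h2]


lemma blocksAux_tf (k : ℕ) :
    blocksAux false ((List.replicate k [true, false]).flatten) = k := by
  induction k with
  | zero => simp [blocksAux]
  | succ k ih => simp [List.replicate_succ, blocksAux, ih, Nat.add_comm]


lemma blocksAux_ft (k : ℕ) (p : Bool) :
    blocksAux p ((List.replicate k [false, true]).flatten) = k := by
  induction k generalizing p with
  | zero => simp [blocksAux]
  | succ k ih => simp [List.replicate_succ, blocksAux, ih, Nat.add_comm]


lemma blocksAux_le (l : List Bool) (p : Bool) :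
    2 * blocksAux p l ≤ l.length + (if p = false then 1 else 0) := by
  induction l generalizing p with
  | nil => simp [blocksAux]
  | cons b rest ih =>
    have := ih b
    cases b <;> cases p <;> simp [blocksAux] at * <;> omega


lemma map_word (x₁ x₂ : X) (k : ℕ) (f : X → Bool) :
    ((List.replicate k [x₁, x₂]).flatten).map f = (List.replicate k [f x₁, f x₂]).flatten := by
  rw [List.map_flatten, List.map_replicate]; rfl


lemma blockCount_le (x₁ x₂ : X) (k : ℕ) (S : List X) :
    blockCount ((List.replicate k [x₁, x₂]).flatten) S ≤ k := by
  have h := blocksAux_le (((List.replicate k [x₁, x₂]).flatten).map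
    (fun x => decide (x ∈ S))) false
  rw [List.length_map, length_word] at h
  have h2 : 2 * blocksAux false (((List.replicate k [x₁, x₂]).flatten).map
      (fun x => decide (x ∈ S))) ≤ 2 * k + 1 := by simpa using h
  rw [blockCount]
  omega


lemma blockCount_fst (x₁ x₂ : X) (hx : x₁ ≠ x₂) (k : ℕ) :
    blockCount ((List.replicate k [x₁, x₂]).flatten) [x₁] = k := by
  rw [blockCount, map_word]
  have h1 : decide (x₁ ∈ [x₁]) = true := by simp
  have h2 : decide (x₂ ∈ [x₁]) = false := by simp [hx.symm]
  rw [h1, h2, blocksAux_tf]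


lemma blockCount_snd (x₁ x₂ : X) (hx : x₁ ≠ x₂) (k : ℕ) :
    blockCount ((List.replicate k [x₁, x₂]).flatten) [x₂] = k := by
  rw [blockCount, map_word]
  have h1 : decide (x₁ ∈ [x₂]) = false := by simp [hx]
  have h2 : decide (x₂ ∈ [x₂]) = true := by simp
  rw [h1, h2, blocksAux_ft]


lemma toFinset_word (x₁ x₂ : X) (k : ℕ) (hk : 1 ≤ k) :
    ((List.replicate k [x₁, x₂]).flatten).toFinset = {x₁, x₂} := by
  ext x
  simp only [List.mem_toFinset, List.mem_flatten, List.mem_replicate, Finset.mem_insert,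
    Finset.mem_singleton]
  constructor
  · rintro ⟨l, ⟨-, rfl⟩, hx⟩; simpa using hx
  · rintro h; exact ⟨[x₁, x₂], ⟨by omega, rfl⟩, by simpa using h⟩


lemma locality_word (x₁ x₂ : X) (hx : x₁ ≠ x₂) (k : ℕ) (hk : 1 ≤ k) :
    locality ((List.replicate k [x₁, x₂]).flatten) = k := by
  set w := (List.replicate k [x₁, x₂]).flatten with hw
  have hub : ∀ σ : List X, markingNumber w σ ≤ k := fun σ =>
    Finset.sup_le (fun i _ => blockCount_le x₁ x₂ k _)
  have hone : ∀ a : X, a = x₁ ∨ a = x₂ → blockCount w [a] = k := by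
    rintro a (rfl | rfl)
    · exact blockCount_fst _ _ hx _
    · exact blockCount_snd _ _ hx _
  have hlb : ∀ σ, IsMarkingSeq w σ → k ≤ markingNumber w σ := by
    rintro σ ⟨hnd, hfs⟩
    rw [toFinset_word x₁ x₂ k hk] at hfs
    cases σ with
    | nil =>
      exfalso
      rw [List.toFinset_nil] at hfs
      have : x₁ ∈ (∅ : Finset X) := hfs ▸ (by simp)
      simp at this
    | cons a τ =>
      have ha : a = x₁ ∨ a = x₂ := by
        have : a ∈ ({x₁, x₂} : Finset X) := hfs ▸ (by simp)
        simpa using this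
      have h1 : blockCount w ((a :: τ).take 1) = k := by
        rw [List.take_succ_cons, List.take_zero]; exact hone a ha
      have h2 : blockCount w ((a :: τ).take 1) ≤ markingNumber w (a :: τ) :=
        Finset.le_sup (f := fun i => blockCount w ((a :: τ).take i)) (by simp)
      omega
  have hset : {n | ∃ σ, IsMarkingSeq w σ ∧ markingNumber w σ = n} = {k} := by
    ext n
    simp only [Set.mem_setOf_eq, Set.mem_singleton_iff]
    constructor
    · rintro ⟨σ, hσ, rfl⟩; exact le_antisymm (hub σ) (hlb σ hσ)
    · rintro rfl
      have hms : IsMarkingSeq w [x₁, x₂] :=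
        ⟨by simp [hx], by rw [toFinset_word x₁ x₂ _ hk]; simp⟩
      exact ⟨[x₁, x₂], hms, le_antisymm (hub _) (hlb _ hms)⟩
  rw [locality, hset, csInf_singleton]


lemma clique_in_bag {W : Type*} (G : SimpleGraph W) (m : ℕ) (B : ℕ → Finset W)
    (hpd : IsPathDecomp G m B) (C : Finset W) (hC : C.Nonempty)
    (hcl : ∀ u ∈ C, ∀ v ∈ C, u ≠ v → G.Adj u v) :
    ∃ t ≤ m, ∀ v ∈ C, v ∈ B t := by
  obtain ⟨hcov, hint⟩ := hpd
  choose a b hab hbm hmem using hint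
  obtain ⟨v₀, hv₀, hsup⟩ := Finset.exists_mem_eq_sup C hC a
  refine ⟨a v₀, le_trans (hab v₀) (hbm v₀), ?_⟩
  intro v hv
  rw [hmem]
  refine ⟨hsup ▸ Finset.le_sup hv, ?_⟩
  by_cases hvv : v = v₀
  · subst hvv; exact hab v
  · obtain ⟨t, htm, hv₀t, hvt⟩ := hcov v₀ v (hcl v₀ hv₀ v hv (fun h => hvv h.symm))
    have h1 := (hmem v₀ t).1 hv₀t
    have h2 := (hmem v t).1 hvt
    omega


lemma core_lower {W : Type*} (G : SimpleGraph W) (m k : ℕ) (hk : 1 ≤ k) (B : ℕ → Finset W)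
    (hpd : IsPathDecomp G m B) (hcard : ∀ t, (B t).card ≤ k)
    (E O : ℕ → W)
    (hadj : ∀ j < k, G.Adj (E j) (O j))
    (hEO : ∀ j j', j < k → j' < k → E j ≠ O j')
    (hEinj : ∀ j j', j < k → j' < k → E j = E j' → j = j')
    (hOinj : ∀ j j', j < k → j' < k → O j = O j' → j = j')
    (s r : ℕ) (hsr : s ≤ r)
    (hBs : ∀ v, v ∈ B s ↔ ∃ j, j < k ∧ E j = v)
    (hBr : ∀ v, v ∈ B r ↔ ∃ j, j < k ∧ O j = v) : False := by
  obtain ⟨hcov, hint⟩ := hpd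
  choose a b hab hbm hmem using hint
  have hEs : ∀ j < k, E j ∈ B s := fun j hj => (hBs (E j)).2 ⟨j, hj, rfl⟩
  have hOr : ∀ j < k, O j ∈ B r := fun j hj => (hBr (O j)).2 ⟨j, hj, rfl⟩
  have hOs : ∀ j < k, O j ∉ B s := by
    intro j hj h
    obtain ⟨j', hj', he⟩ := (hBs (O j)).1 h
    exact hEO j' j hj' hj he
  have hEr : ∀ j < k, E j ∉ B r := by
    intro j hj h
    obtain ⟨j', hj', he⟩ := (hBr (E j)).1 h
    exact hEO j j' hj hj' he.symm
  have key : ∀ t, s ≤ t → t ≤ r → ∀ j, j < k → E j ∈ B t ∨ O j ∈ B t := by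
    intro t hst htr j hj
    have hE := (hmem (E j) s).1 (hEs j hj)
    have hO := (hmem (O j) r).1 (hOr j hj)
    obtain ⟨tj, htjm, hEt, hOt⟩ := hcov (E j) (O j) (hadj j hj)
    have hE2 := (hmem (E j) tj).1 hEt
    have hO2 := (hmem (O j) tj).1 hOt
    by_cases hc : t ≤ b (E j)
    · exact Or.inl ((hmem (E j) t).2 (by omega))
    · exact Or.inr ((hmem (O j) t).2 (by omega))
  obtain ⟨t₀, ht₀m, hE0, hO0⟩ := hcov (E 0) (O 0) (hadj 0 hk)
  have hst₀ : s ≤ t₀ ∧ t₀ ≤ r := by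
    have hE := (hmem (E 0) s).1 (hEs 0 hk)
    have hO := (hmem (O 0) r).1 (hOr 0 hk)
    have hE2 := (hmem (E 0) t₀).1 hE0
    have hO2 := (hmem (O 0) t₀).1 hO0
    have hOs' := hOs 0 hk
    have hEr' := hEr 0 hk
    rw [hmem] at hOs' hEr'
    push_neg at hOs' hEr'
    constructor
    · by_contra hcon
      push_neg at hcon
      have : a (O 0) ≤ s ∧ s ≤ b (O 0) := by omega
      omega
    · by_contra hcon
      push_neg at hcon
      have : a (E 0) ≤ r ∧ r ≤ b (E 0) := by omega
      omega
  set g : ℕ → W := fun j => if j < k then (if E j ∈ B t₀ then E j else O j) else O 0 with hg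
  have hgmem : ∀ j ∈ Finset.range (k + 1), g j ∈ B t₀ := by
    intro j hj
    rw [Finset.mem_range] at hj
    by_cases hjk : j < k
    · simp only [hg, if_pos hjk]
      by_cases hEj : E j ∈ B t₀
      · rwa [if_pos hEj]
      · rw [if_neg hEj]
        rcases key t₀ hst₀.1 hst₀.2 j hjk with h | h
        · exact absurd h hEj
        · exact h
    · simp only [hg, if_neg hjk]
      exact hO0
  have hginj : Set.InjOn g (Finset.range (k + 1)) := by
    intro j hj j' hj' he
    simp only [Finset.coe_range, Set.mem_Iio] at hj hj'
    have hcase : ∀ i, i < k → g i = E i ∨ g i = O i := by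
      intro i hi
      simp only [hg, if_pos hi]
      by_cases hEi : E i ∈ B t₀
      · exact Or.inl (by rw [if_pos hEi])
      · exact Or.inr (by rw [if_neg hEi])
    have hg0 : g 0 = E 0 := by
      have h0 : g 0 = if 0 < k then (if E 0 ∈ B t₀ then E 0 else O 0) else O 0 := rfl
      rw [h0, if_pos (show 0 < k from hk), if_pos hE0]
    by_cases h1 : j < k <;> by_cases h2 : j' < k
    · rcases hcase j h1 with hA | hA <;> rcases hcase j' h2 with hB | hB <;>
        rw [hA, hB] at he
      · exact hEinj j j' h1 h2 he
      · exact absurd he (hEO j j' h1 h2)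
      · exact absurd he.symm (hEO j' j h2 h1)
      · exact hOinj j j' h1 h2 he
    · have hj'k : j' = k := by omega
      subst hj'k
      have hgj' : g j' = O 0 := by simp [hg]
      rcases hcase j h1 with hA | hA <;> rw [hA, hgj'] at he
      · exact absurd he (hEO j 0 h1 hk)
      · have hj0 : j = 0 := hOinj j 0 h1 hk he
        subst hj0
        rw [hg0] at hA
        exact absurd hA (hEO 0 0 hk hk)
    · have hjk : j = k := by omega
      subst hjk
      have hgj : g j = O 0 := by simp [hg]
      rcases hcase j' h2 with hA | hA <;> rw [hA, hgj] at he
      · exact absurd he.symm (hEO j' 0 h2 hk)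
      · have hj0 : j' = 0 := hOinj j' 0 h2 hk he.symm
        subst hj0
        rw [hg0] at hA
        exact absurd hA (hEO 0 0 hk hk)
    · omega
  have hle := Finset.card_le_card_of_injOn g hgmem hginj
  rw [Finset.card_range] at hle
  have := hcard t₀
  omega


lemma length_word' (x₁ x₂ : X) (k : ℕ) :
    ((List.replicate k [x₁, x₂]).flatten).length = 2 * k := by
  induction k with
  | zero => simp
  | succ k ih => simp [List.replicate_succ, ih]; ring


lemma getElem_word' (x₁ x₂ : X) (k i : ℕ) (h : i < ((List.replicate k [x₁, x₂]).flatten).length) :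
    ((List.replicate k [x₁, x₂]).flatten)[i] = if i % 2 = 0 then x₁ else x₂ := by
  induction k generalizing i with
  | zero => simp at h
  | succ k ih =>
    simp only [List.replicate_succ, List.flatten_cons] at h ⊢
    match i with
    | 0 => simp
    | 1 => simp
    | (i+2) =>
      rw [List.getElem_append_right (by simp)]
      simp only [List.length_cons, List.length_nil, Nat.zero_add, Nat.add_sub_cancel]
      rw [ih i (by simp at h ⊢; omega)]
      have h2 : (i + 2) % 2 = i % 2 := by omega
      rw [h2]


lemma pathwidth_word (x₁ x₂ : X) (hx : x₁ ≠ x₂) (k : ℕ) (hk : 1 ≤ k) :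
    pathwidth (wordGraph ((List.replicate k [x₁, x₂]).flatten)) = k := by
  set w : List X := (List.replicate k [x₁, x₂]).flatten with hw
  have hlen : w.length = 2 * k := length_word' x₁ x₂ k
  have hget : ∀ v : Fin w.length, w.get v = if (v : ℕ) % 2 = 0 then x₁ else x₂ := fun v => by
    rw [List.get_eq_getElem]; exact getElem_word' x₁ x₂ k v v.isLt
  have hpos : 0 < w.length := by omega
  have hadj : ∀ (u v : Fin w.length), u ≠ v →
      ((u : ℕ) + 1 = (v : ℕ) ∨ (u : ℕ) % 2 = (v : ℕ) % 2) → (wordGraph w).Adj u v := by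
    intro u v hne h
    rw [wordGraph, SimpleGraph.fromRel_adj]
    rcases h with h | h
    · exact ⟨hne, Or.inl (Or.inl h)⟩
    · refine ⟨hne, Or.inl (Or.inr ?_)⟩
      rw [hget u, hget v]
      by_cases h1 : (u : ℕ) % 2 = 0
      · rw [if_pos h1, if_pos (by omega)]
      · rw [if_neg h1, if_neg (by omega)]
  -- parity from adjacency via same letter
  have hparity : ∀ (a b : Fin w.length), w.get a = w.get b → (a : ℕ) % 2 = (b : ℕ) % 2 := by
    intro a b h
    rw [hget a, hget b] at h
    by_cases h1 : (a : ℕ) % 2 = 0 <;> by_cases h2 : (b : ℕ) % 2 = 0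
    · omega
    · rw [if_pos h1, if_neg h2] at h; exact absurd h hx
    · rw [if_neg h1, if_pos h2] at h; exact absurd h.symm hx
    · omega
  -- the upper-bound decomposition
  set B : ℕ → Finset (Fin w.length) := fun t => Finset.univ.filter
    (fun v => ((v : ℕ) % 2 = 0 ∧ t ≤ (v : ℕ) / 2) ∨
      ((v : ℕ) % 2 = 1 ∧ (v : ℕ) / 2 ≤ t ∧ t ≤ k)) with hB
  have hBmem : ∀ (t : ℕ) (v : Fin w.length), v ∈ B t ↔
      (((v : ℕ) % 2 = 0 ∧ t ≤ (v : ℕ) / 2) ∨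
      ((v : ℕ) % 2 = 1 ∧ (v : ℕ) / 2 ≤ t ∧ t ≤ k)) := by
    intro t v; rw [hB]; simp
  have hpd : IsPathDecomp (wordGraph w) k B := by
    constructor
    · intro u v huv
      rw [wordGraph, SimpleGraph.fromRel_adj] at huv
      obtain ⟨hne, hrel⟩ := huv
      have hu2 : (u : ℕ) < 2 * k := hlen ▸ u.isLt
      have hv2 : (v : ℕ) < 2 * k := hlen ▸ v.isLt
      have hpar : ((u : ℕ) + 1 = (v : ℕ) ∨ (v : ℕ) + 1 = (u : ℕ)) ∨
          (u : ℕ) % 2 = (v : ℕ) % 2 := by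
        rcases hrel with (h | h) | (h | h)
        · exact Or.inl (Or.inl h)
        · exact Or.inr (hparity u v h)
        · exact Or.inl (Or.inr h)
        · exact Or.inr (hparity v u h).symm
      rcases hpar with (h | h) | h
      · by_cases hu : (u : ℕ) % 2 = 0
        · refine ⟨(u : ℕ) / 2, by omega, ?_, ?_⟩ <;> rw [hBmem] <;> omega
        · refine ⟨(v : ℕ) / 2, by omega, ?_, ?_⟩ <;> rw [hBmem] <;> omega
      · by_cases hv : (v : ℕ) % 2 = 0
        · refine ⟨(v : ℕ) / 2, by omega, ?_, ?_⟩ <;> rw [hBmem] <;> omega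
        · refine ⟨(u : ℕ) / 2, by omega, ?_, ?_⟩ <;> rw [hBmem] <;> omega
      · by_cases hu : (u : ℕ) % 2 = 0
        · exact ⟨0, by omega, by rw [hBmem]; omega, by rw [hBmem]; omega⟩
        · exact ⟨k, le_rfl, by rw [hBmem]; omega, by rw [hBmem]; omega⟩
    · intro v
      have hv2 : (v : ℕ) < 2 * k := hlen ▸ v.isLt
      by_cases hv : (v : ℕ) % 2 = 0
      · exact ⟨0, (v : ℕ) / 2, by omega, by omega, fun t => by rw [hBmem]; omega⟩
      · exact ⟨(v : ℕ) / 2, k, by omega, le_rfl, fun t => by rw [hBmem]; omega⟩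
  have hcards : ∀ t, (B t).card ≤ k + 1 := by
    intro t
    have hle : (B t).card ≤ (Finset.range (k + 1)).card := by
      refine Finset.card_le_card_of_injOn
        (fun v => if (v : ℕ) % 2 = 1 then t - (v : ℕ) / 2 else (v : ℕ) / 2 + 1) ?_ ?_
      · intro v hv
        rw [Finset.mem_coe, hBmem] at hv
        have hvlt : (v : ℕ) < 2 * k := hlen ▸ v.isLt
        rw [Finset.mem_coe, Finset.mem_range]
        show (if (v : ℕ) % 2 = 1 then t - (v : ℕ) / 2 else (v : ℕ) / 2 + 1) < k + 1
        by_cases h : (v : ℕ) % 2 = 1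
        · rw [if_pos h]; omega
        · rw [if_neg h]; omega
      · intro u hu v hv he
        simp only [Finset.mem_coe] at hu hv
        rw [hBmem] at hu hv
        have hu2 : (u : ℕ) < 2 * k := hlen ▸ u.isLt
        have hv2 : (v : ℕ) < 2 * k := hlen ▸ v.isLt
        simp only at he
        split_ifs at he <;> (apply Fin.ext; omega)
    rwa [Finset.card_range] at hle
  have hkmem : k ∈ {n | ∃ m B, IsPathDecomp (wordGraph w) m B ∧ ∀ t, (B t).card ≤ n + 1} :=
    ⟨k, B, hpd, hcards⟩
  -- lower bound
  have hlb : ∀ n ∈ {n | ∃ m B, IsPathDecomp (wordGraph w) m B ∧ ∀ t, (B t).card ≤ n + 1},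
      k ≤ n := by
    rintro n ⟨m, B', hpd', hc⟩
    by_contra hlt
    push_neg at hlt
    have hc' : ∀ t, (B' t).card ≤ k := fun t => le_trans (hc t) (by omega)
    set Ev : ℕ → Fin w.length := fun j => ⟨2 * j % w.length, Nat.mod_lt _ hpos⟩ with hEv
    set Od : ℕ → Fin w.length := fun j => ⟨(2 * j + 1) % w.length, Nat.mod_lt _ hpos⟩ with hOd
    have hEval : ∀ j, j < k → ((Ev j) : ℕ) = 2 * j := fun j hj =>
      Nat.mod_eq_of_lt (by omega)
    have hOval : ∀ j, j < k → ((Od j) : ℕ) = 2 * j + 1 := fun j hj =>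
      Nat.mod_eq_of_lt (by omega)
    have hEvinj : ∀ j j', j < k → j' < k → Ev j = Ev j' → j = j' := by
      intro j j' hj hj' h
      have := congrArg Fin.val h
      rw [hEval j hj, hEval j' hj'] at this; omega
    have hOdinj : ∀ j j', j < k → j' < k → Od j = Od j' → j = j' := by
      intro j j' hj hj' h
      have := congrArg Fin.val h
      rw [hOval j hj, hOval j' hj'] at this; omega
    have hneEO : ∀ j j', j < k → j' < k → Ev j ≠ Od j' := by
      intro j j' hj hj' h
      have := congrArg Fin.val h
      rw [hEval j hj, hOval j' hj'] at this; omega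
    have hneOE : ∀ j j', j < k → j' < k → Od j ≠ Ev j' := by
      intro j j' hj hj' h
      exact hneEO j' j hj' hj h.symm
    have hadjEO : ∀ j, j < k → (wordGraph w).Adj (Ev j) (Od j) := fun j hj =>
      hadj _ _ (hneEO j j hj hj) (Or.inl (by rw [hEval j hj, hOval j hj]))
    have hadjOE : ∀ j, j < k → (wordGraph w).Adj (Od j) (Ev j) := fun j hj =>
      (hadjEO j hj).symm
    -- the even clique
    have hclE : ∀ u ∈ (Finset.range k).image Ev, ∀ v ∈ (Finset.range k).image Ev,
        u ≠ v → (wordGraph w).Adj u v := by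
      intro u hu v hv hne
      obtain ⟨j, hj, rfl⟩ := Finset.mem_image.1 hu
      obtain ⟨j', hj', rfl⟩ := Finset.mem_image.1 hv
      rw [Finset.mem_range] at hj hj'
      refine hadj _ _ hne (Or.inr ?_)
      rw [hEval j hj, hEval j' hj']; omega
    have hclO : ∀ u ∈ (Finset.range k).image Od, ∀ v ∈ (Finset.range k).image Od,
        u ≠ v → (wordGraph w).Adj u v := by
      intro u hu v hv hne
      obtain ⟨j, hj, rfl⟩ := Finset.mem_image.1 hu
      obtain ⟨j', hj', rfl⟩ := Finset.mem_image.1 hv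
      rw [Finset.mem_range] at hj hj'
      refine hadj _ _ hne (Or.inr ?_)
      rw [hOval j hj, hOval j' hj']; omega
    obtain ⟨s, hsm, hs⟩ := clique_in_bag (wordGraph w) m B' hpd' ((Finset.range k).image Ev)
      ⟨Ev 0, Finset.mem_image_of_mem _ (Finset.mem_range.2 hk)⟩ hclE
    obtain ⟨r, hrm, hr⟩ := clique_in_bag (wordGraph w) m B' hpd' ((Finset.range k).image Od)
      ⟨Od 0, Finset.mem_image_of_mem _ (Finset.mem_range.2 hk)⟩ hclO
    have hcardE : ((Finset.range k).image Ev).card = k := by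
      rw [Finset.card_image_of_injOn, Finset.card_range]
      intro j hj j' hj' h
      simp only [Finset.coe_range, Set.mem_Iio] at hj hj'
      exact hEvinj j j' hj hj' h
    have hcardO : ((Finset.range k).image Od).card = k := by
      rw [Finset.card_image_of_injOn, Finset.card_range]
      intro j hj j' hj' h
      simp only [Finset.coe_range, Set.mem_Iio] at hj hj'
      exact hOdinj j j' hj hj' h
    have hBsEv : B' s = (Finset.range k).image Ev :=
      (Finset.eq_of_subset_of_card_le (fun v hv => hs v hv)
        (by rw [hcardE]; exact hc' s)).symm
    have hBrOd : B' r = (Finset.range k).image Od :=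
      (Finset.eq_of_subset_of_card_le (fun v hv => hr v hv)
        (by rw [hcardO]; exact hc' r)).symm
    have hBsEv' : ∀ v, v ∈ B' s ↔ ∃ j, j < k ∧ Ev j = v := by
      intro v
      rw [hBsEv, Finset.mem_image]
      constructor
      · rintro ⟨j, hj, rfl⟩; exact ⟨j, Finset.mem_range.1 hj, rfl⟩
      · rintro ⟨j, hj, rfl⟩; exact ⟨j, Finset.mem_range.2 hj, rfl⟩
    have hBrOd' : ∀ v, v ∈ B' r ↔ ∃ j, j < k ∧ Od j = v := by
      intro v
      rw [hBrOd, Finset.mem_image]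
      constructor
      · rintro ⟨j, hj, rfl⟩; exact ⟨j, Finset.mem_range.1 hj, rfl⟩
      · rintro ⟨j, hj, rfl⟩; exact ⟨j, Finset.mem_range.2 hj, rfl⟩
    rcases le_total s r with hsr | hsr
    · exact core_lower (wordGraph w) m k hk B' hpd' hc' Ev Od hadjEO hneEO hEvinj hOdinj
        s r hsr hBsEv' hBrOd'
    · exact core_lower (wordGraph w) m k hk B' hpd' hc' Od Ev hadjOE hneOE hOdinj hEvinj
        r s hsr hBrOd' hBsEv'
  exact le_antisymm (Nat.sInf_le hkmem) (le_csInf ⟨k, hkmem⟩ hlb)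


/-- For `k ≥ 1`, the word `β = (x₁x₂)^k` over two distinct letters satisfies
`loc(β) = pathwidth(G_β) = k`. -/
theorem locality_and_pathwidth_alternating (x₁ x₂ : X) (hx : x₁ ≠ x₂)
    (k : ℕ) (hk : 1 ≤ k) :
    locality ((List.replicate k [x₁, x₂]).flatten) = k ∧
      pathwidth (wordGraph ((List.replicate k [x₁, x₂]).flatten)) = k :=
  ⟨locality_word x₁ x₂ hx k hk, pathwidth_word x₁ x₂ hx k hk⟩
end
end

section
/- If u is a word with loc(u) = k and w is the palindrome u a u^R or u u^R (a a letter, u^R the reversal of u), then loc(w) ∈ {2k − 1, 2k, 2k + 1}. -/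
noncomputable section

attribute [local instance] Classical.propDecidable

variable {X : Type*} [DecidableEq X]

lemma blocksAux_le_false (p : Bool) (l : List Bool) : blocksAux p l ≤ blocksAux false l := by
  cases l with
  | nil => simp [blocksAux]
  | cons b t => cases p <;> simp [blocksAux] <;> split <;> omega

lemma blocksAux_false_le (p : Bool) (l : List Bool) :
    blocksAux false l ≤ blocksAux p l + 1 := by
  cases l with
  | nil => simp [blocksAux]
  | cons b t => cases p <;> simp [blocksAux] <;> split <;> omega

lemma blocksAux_append (p : Bool) (l1 l2 : List Bool) :
    blocksAux p (l1 ++ l2) = blocksAux p l1 + blocksAux (l1.getLastD p) l2 := by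
  induction l1 generalizing p with
  | nil => simp [blocksAux]
  | cons b t ih =>
    rw [List.cons_append]
    show _ + blocksAux b (t ++ l2) = _
    rw [ih b, List.getLastD_cons, blocksAux]
    omega

lemma blocksAux_reverse (l : List Bool) :
    blocksAux false l.reverse = blocksAux false l := by
  induction l with
  | nil => rfl
  | cons b t ih =>
    rw [List.reverse_cons, blocksAux_append, ih]
    have hq : (t.reverse).getLastD false = t.headD false := by
      cases t with
      | nil => rfl
      | cons c t' =>
        rw [List.getLastD_eq_getLast?, List.getLast?_reverse]
        simp
    rw [hq]
    cases b with
    | false => simp [blocksAux]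
    | true =>
      cases t with
      | nil => simp [blocksAux]
      | cons c t' => cases c <;> simp [blocksAux] <;> omega

lemma blockCount_congr {w S T : List X} (h : ∀ x ∈ w, x ∈ S ↔ x ∈ T) :
    blockCount w S = blockCount w T := by
  unfold blockCount
  congr 1
  apply List.map_congr_left
  intro x hx
  exact decide_eq_decide.mpr (h x hx)

lemma blockCount_append_le (u v S : List X) :
    blockCount (u ++ v) S ≤ blockCount u S + blockCount v S := by
  unfold blockCount
  rw [List.map_append, blocksAux_append]
  have := blocksAux_le_false ((u.map fun x => decide (x ∈ S)).getLastD false)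
    (v.map fun x => decide (x ∈ S))
  omega

lemma blockCount_le_append (u v S : List X) :
    blockCount u S + blockCount v S ≤ blockCount (u ++ v) S + 1 := by
  unfold blockCount
  rw [List.map_append, blocksAux_append]
  have := blocksAux_false_le ((u.map fun x => decide (x ∈ S)).getLastD false)
    (v.map fun x => decide (x ∈ S))
  omega

lemma blockCount_cons_le (a : X) (v S : List X) :
    blockCount (a :: v) S ≤ blockCount v S + 1 := by
  unfold blockCount
  rw [List.map_cons]
  show (if _ then 1 else 0) + blocksAux _ _ ≤ _
  have := blocksAux_le_false (decide (a ∈ S)) (v.map fun x => decide (x ∈ S))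
  split <;> omega

lemma blockCount_le_cons (a : X) (v S : List X) :
    blockCount v S ≤ blockCount (a :: v) S := by
  unfold blockCount
  rw [List.map_cons]
  show _ ≤ (if _ then 1 else 0) + blocksAux _ _
  have := blocksAux_false_le (decide (a ∈ S)) (v.map fun x => decide (x ∈ S))
  cases hb : decide (a ∈ S) <;> simp [hb] at this ⊢ <;> omega

lemma blockCount_reverse (u S : List X) :
    blockCount u.reverse S = blockCount u S := by
  unfold blockCount
  rw [List.map_reverse, blocksAux_reverse]

lemma exists_take_filter (p : X → Bool) (l : List X) (i : ℕ) :
    ∃ j ≤ l.length, (l.take j).filter p = (l.filter p).take i := by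
  induction l generalizing i with
  | nil => exact ⟨0, by simp⟩
  | cons b t ih =>
    cases i with
    | zero => exact ⟨0, by simp⟩
    | succ i' =>
      by_cases hb : p b
      · obtain ⟨j, hj, h⟩ := ih i'
        exact ⟨j + 1, by simpa using hj, by simp [List.filter_cons, hb, h]⟩
      · obtain ⟨j, hj, h⟩ := ih (i' + 1)
        exact ⟨j + 1, by simpa using hj, by simp [List.filter_cons, hb, h]⟩


lemma marking_set_nonempty (w : List X) :
    {n | ∃ σ, IsMarkingSeq w σ ∧ markingNumber w σ = n}.Nonempty :=
  ⟨_, w.dedup, ⟨w.nodup_dedup, by ext x; simp [List.mem_dedup]⟩, rfl⟩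

lemma blockCount_take_le_markingNumber (w σ : List X) {j : ℕ} (hj : j ≤ σ.length) :
    blockCount w (σ.take j) ≤ markingNumber w σ :=
  Finset.le_sup (f := fun i => blockCount w (σ.take i)) (Finset.mem_range.mpr (by omega))

lemma locality_lower (u w : List X) (k : ℕ) (hk : locality u = k)
    (hsub : u.toFinset ⊆ w.toFinset)
    (hb : ∀ S : List X, 2 * blockCount u S ≤ blockCount w S + 1) :
    2 * k ≤ locality w + 1 := by
  obtain ⟨σ, hσ, hM⟩ := Nat.sInf_mem (marking_set_nonempty w)
  have hML : markingNumber w σ = locality w := hM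
  set p : X → Bool := fun x => decide (x ∈ u.toFinset) with hp
  set σ' := σ.filter p with hσ'
  have hmem : ∀ x ∈ u, p x = true := fun x hx => by
    simp [hp, List.mem_toFinset, hx]
  have hms : IsMarkingSeq u σ' := by
    refine ⟨hσ.1.filter p, ?_⟩
    rw [hσ', List.toFinset_filter, hσ.2]
    ext x
    simp only [Finset.mem_filter, hp, decide_eq_true_eq]
    exact ⟨fun h => h.2, fun h => ⟨hsub h, h⟩⟩
  have hkle : k ≤ markingNumber u σ' := by
    rw [← hk]
    exact Nat.sInf_le ⟨σ', hms, rfl⟩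
  have hkey : 2 * markingNumber u σ' ≤ locality w + 1 := by
    obtain ⟨i, hi, hieq⟩ := Finset.exists_mem_eq_sup (Finset.range (σ'.length + 1))
      ⟨0, by simp⟩ (fun i => blockCount u (σ'.take i))
    rw [markingNumber, hieq]
    obtain ⟨j, hj, hjf⟩ := exists_take_filter p σ i
    have h1 : blockCount u (σ'.take i) = blockCount u (σ.take j) := by
      rw [hσ', ← hjf]
      exact blockCount_congr fun x hx =>
        ⟨fun h => (List.mem_filter.mp h).1, fun h => List.mem_filter.mpr ⟨h, hmem x hx⟩⟩
    calc 2 * blockCount u (σ'.take i) = 2 * blockCount u (σ.take j) := by rw [h1]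
      _ ≤ blockCount w (σ.take j) + 1 := hb _
      _ ≤ markingNumber w σ + 1 := by
          have := blockCount_take_le_markingNumber w σ hj; omega
      _ = locality w + 1 := by rw [hML]
  omega

lemma locality_upper (u w : List X) (a : X) (k : ℕ) (hk : locality u = k)
    (halph : w.toFinset = u.toFinset ∨ (a ∉ u.toFinset ∧ w.toFinset = insert a u.toFinset))
    (hb : ∀ S : List X, blockCount w S ≤ 2 * blockCount u S + 1) :
    locality w ≤ 2 * k + 1 := by
  obtain ⟨σ, hσ, hM⟩ := Nat.sInf_mem (marking_set_nonempty u)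
  have hML : markingNumber u σ = k := by rw [hM, ← hk]; rfl
  have hbc' : ∀ i ≤ σ.length, blockCount u (σ.take i) ≤ k :=
    fun i hi => hML ▸ blockCount_take_le_markingNumber u σ hi
  rcases halph with heq | ⟨ha, heq⟩
  · have hms : IsMarkingSeq w σ := ⟨hσ.1, hσ.2.trans heq.symm⟩
    have hMw : markingNumber w σ ≤ 2 * k + 1 := by
      apply Finset.sup_le
      intro i hi
      rw [Finset.mem_range] at hi
      have := hb (σ.take i)
      have := hbc' i (by omega)
      omega
    exact le_trans (Nat.sInf_le ⟨σ, hms, rfl⟩) hMw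
  · have haσ : a ∉ σ := fun h => ha (hσ.2 ▸ List.mem_toFinset.mpr h)
    have hms : IsMarkingSeq w (σ ++ [a]) := by
      constructor
      · simp [List.nodup_append, haσ, hσ.1]
        exact fun x hx h => haσ (h ▸ hx)
      · rw [heq, ← hσ.2]
        ext x; simp [or_comm]
    have hMw : markingNumber w (σ ++ [a]) ≤ 2 * k + 1 := by
      apply Finset.sup_le
      intro i hi
      rw [Finset.mem_range] at hi
      have hbu : blockCount u ((σ ++ [a]).take i) ≤ k := by
        by_cases hil : i ≤ σ.length
        · rw [List.take_append_of_le_length hil]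
          exact hbc' i hil
        · rw [List.take_of_length_le (by simp; omega)]
          have hcongr : blockCount u (σ ++ [a]) = blockCount u σ := by
            apply blockCount_congr
            intro x hx
            have hxa : x ≠ a := fun h => ha (h ▸ List.mem_toFinset.mpr hx)
            simp [hxa]
          rw [hcongr, ← List.take_length (l := σ)]
          exact hbc' σ.length le_rfl
      have := hb ((σ ++ [a]).take i)
      omega
    exact le_trans (Nat.sInf_le ⟨σ ++ [a], hms, rfl⟩) hMw


/-- If `loc(u) = k`, then the palindromes `u a u^R` and `u u^R` have locality
number in `{2k - 1, 2k, 2k + 1}`. -/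
theorem locality_palindrome_mem (u : List X) (a : X) (k : ℕ)
    (hk : locality u = k) :
    (locality (u ++ a :: u.reverse) = 2 * k - 1 ∨
      locality (u ++ a :: u.reverse) = 2 * k ∨
      locality (u ++ a :: u.reverse) = 2 * k + 1) ∧
    (locality (u ++ u.reverse) = 2 * k - 1 ∨
      locality (u ++ u.reverse) = 2 * k ∨
      locality (u ++ u.reverse) = 2 * k + 1) := by
  have hamem : a ∈ List.toFinset u → a ∈ u := List.mem_toFinset.mp
  constructor
  · have hub : ∀ S : List X, blockCount (u ++ a :: u.reverse) S ≤ 2 * blockCount u S + 1 := by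
      intro S
      have h1 := blockCount_append_le u (a :: u.reverse) S
      have h2 := blockCount_cons_le a u.reverse S
      have h3 := blockCount_reverse u S
      omega
    have hlb : ∀ S : List X, 2 * blockCount u S ≤ blockCount (u ++ a :: u.reverse) S + 1 := by
      intro S
      have h1 := blockCount_le_append u (a :: u.reverse) S
      have h2 := blockCount_le_cons a u.reverse S
      have h3 := blockCount_reverse u S
      omega
    have hsub : u.toFinset ⊆ (u ++ a :: u.reverse).toFinset := by
      intro x hx
      simp only [List.toFinset_append, Finset.mem_union]
      exact Or.inl hx
    have halph : (u ++ a :: u.reverse).toFinset = u.toFinset ∨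
        (a ∉ u.toFinset ∧ (u ++ a :: u.reverse).toFinset = insert a u.toFinset) := by
      by_cases ha : a ∈ u.toFinset
      · left; ext x; simp only [List.toFinset_append, Finset.mem_union, List.toFinset_cons,
          Finset.mem_insert, List.mem_toFinset, List.mem_reverse]
        constructor
        · rintro (h | h | h)
          · exact h
          · exact h ▸ hamem ha
          · exact h
        · exact fun h => Or.inl h
      · right
        refine ⟨ha, ?_⟩
        ext x; simp only [List.toFinset_append, Finset.mem_union, List.toFinset_cons,
          Finset.mem_insert, List.mem_toFinset, List.mem_reverse]
        tauto
    have hl := locality_lower u _ k hk hsub hlb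
    have hu := locality_upper u _ a k hk halph hub
    omega
  · have hub : ∀ S : List X, blockCount (u ++ u.reverse) S ≤ 2 * blockCount u S + 1 := by
      intro S
      have h1 := blockCount_append_le u u.reverse S
      have h3 := blockCount_reverse u S
      omega
    have hlb : ∀ S : List X, 2 * blockCount u S ≤ blockCount (u ++ u.reverse) S + 1 := by
      intro S
      have h1 := blockCount_le_append u u.reverse S
      have h3 := blockCount_reverse u S
      omega
    have hsub : u.toFinset ⊆ (u ++ u.reverse).toFinset := by
      intro x hx
      simp only [List.toFinset_append, Finset.mem_union]
      exact Or.inl hx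
    have halph : (u ++ u.reverse).toFinset = u.toFinset ∨
        (a ∉ u.toFinset ∧ (u ++ u.reverse).toFinset = insert a u.toFinset) := by
      left; ext x
      simp only [List.toFinset_append, Finset.mem_union, List.mem_toFinset, List.mem_reverse]
      tauto
    have hl := locality_lower u _ k hk hsub hlb
    have hu := locality_upper u _ a k hk halph hub
    omega
end
end
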